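/- Let (c_n)_{n≥-1} and (λ_n)_{n≥0} be sequences of complex numbers such that λ_n ≠ λ_m for n ≠ m, λ_0 is real, λ_n is real for all but finitely many n ≥ 0, ∑_{n≥-1} |c_n| < ∞, and there exists Λ ∈ ℝ with Re λ_n ≤ Λ for all n ≥ 0. If there is a positive real T such that (c_{-1} t + c_0) e^{λ_0 t} + ∑_{n≥1} c_n e^{λ_n t} = 0 for all t ∈ (0,T), then c_n = 0 for all n ≥ -1. -/

import Mathlib

open Complex Filter Topology Set MeasureTheory intervalIntegral

section RRaux

-- from a1.lean
lemma rr_integrable_exp (a : ℂ) (ha : a.re < 0) :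
    IntegrableOn (fun t : ℝ => Complex.exp (a * t)) (Ioi 0) := by
  have hb : (0:ℝ) < -a.re := by linarith
  refine (exp_neg_integrableOn_Ioi 0 hb).mono' ?_ ?_
  · exact (Complex.continuous_exp.comp (continuous_const.mul Complex.continuous_ofReal)).aestronglyMeasurable
  · filter_upwards [ae_restrict_mem measurableSet_Ioi] with t _
    simp only [Complex.norm_exp]
    have : (a * t).re = a.re * t := by simp [Complex.mul_re]
    rw [this]
    exact le_of_eq (by ring_nf)

lemma rr_tendsto_exp_zero (a : ℂ) (ha : a.re < 0) :
    Tendsto (fun Y : ℝ => Complex.exp (a * Y)) atTop (𝓝 0) := by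
  rw [tendsto_zero_iff_norm_tendsto_zero]
  have h1 : Tendsto (fun Y : ℝ => -a.re * Y) atTop atTop :=
    tendsto_id.const_mul_atTop (by linarith)
  have h2 : Tendsto (fun Y : ℝ => Real.exp (-(-a.re * Y))) atTop (𝓝 0) :=
    Real.tendsto_exp_neg_atTop_nhds_zero.comp h1
  refine h2.congr fun Y => ?_
  simp [Complex.norm_exp, Complex.mul_re]

lemma rr_tendsto_mul_exp_zero (a : ℂ) (ha : a.re < 0) :
    Tendsto (fun Y : ℝ => (Y:ℂ) * Complex.exp (a * Y)) atTop (𝓝 0) := by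
  have hb : (0:ℝ) < -a.re := by linarith
  have key : Tendsto (fun Y : ℝ => Y * Real.exp (a.re * Y)) atTop (𝓝 0) := by
    have h1 : Tendsto (fun Y : ℝ => -a.re * Y) atTop atTop :=
      tendsto_id.const_mul_atTop hb
    have h2 := (Real.tendsto_pow_mul_exp_neg_atTop_nhds_zero 1).comp h1
    have h3 := h2.const_mul (1 / -a.re)
    rw [mul_zero] at h3
    refine h3.congr fun Y => ?_
    have ha0 : a.re ≠ 0 := by linarith
    have e : (-a.re)⁻¹ * -a.re = 1 := inv_mul_cancel₀ (neg_ne_zero.2 ha0)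
    simp only [Function.comp_apply, pow_one]
    rw [one_div, ← mul_assoc, ← mul_assoc, e, one_mul, neg_mul, neg_neg]
  refine squeeze_zero_norm' ?_ key
  filter_upwards [eventually_ge_atTop (0:ℝ)] with Y hY
  simp only [norm_mul, Complex.norm_exp, Complex.norm_real, Real.norm_eq_abs]
  have : (a * Y).re = a.re * Y := by simp [Complex.mul_re]
  rw [this, _root_.abs_of_nonneg hY]

lemma rr_integral_exp_Ioi (a : ℂ) (ha : a.re < 0) :
    ∫ t in Ioi (0:ℝ), Complex.exp (a * t) = -1 / a := by
  have ha0 : a ≠ 0 := fun h => by simp [h] at ha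
  have h1 := intervalIntegral_tendsto_integral_Ioi 0 (rr_integrable_exp a ha) tendsto_id
  have h2 : Tendsto (fun Y : ℝ => ∫ t in (0:ℝ)..Y, Complex.exp (a * t)) atTop (𝓝 (-1/a)) := by
    have : ∀ Y : ℝ, (∫ t in (0:ℝ)..Y, Complex.exp (a * t))
        = (Complex.exp (a * Y) - 1) / a := by
      intro Y
      rw [integral_exp_mul_complex ha0]
      simp
    simp_rw [this]
    have := ((rr_tendsto_exp_zero a ha).sub_const 1).div_const a
    simpa using this
  exact tendsto_nhds_unique h1 h2

-- from a2.lean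
lemma rr_integrable_mul_exp (a : ℂ) (ha : a.re < 0) :
    IntegrableOn (fun t : ℝ => (t:ℂ) * Complex.exp (a * t)) (Ioi 0) := by
  have hb : (0:ℝ) < -a.re := by linarith
  have hb2 : (0:ℝ) < -a.re / 2 := by linarith
  refine Integrable.mono' ((exp_neg_integrableOn_Ioi 0 hb2).const_mul (2 / -a.re)) ?_ ?_
  · exact (Complex.continuous_ofReal.mul (Complex.continuous_exp.comp
      (continuous_const.mul Complex.continuous_ofReal))).aestronglyMeasurable
  · filter_upwards [ae_restrict_mem measurableSet_Ioi] with t ht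
    simp only [norm_mul, Complex.norm_exp, Complex.norm_real, Real.norm_eq_abs]
    have h1 : (a * t).re = a.re * t := by simp [Complex.mul_re]
    rw [h1, _root_.abs_of_nonneg (le_of_lt ht)]
    have key : t ≤ 2 / -a.re * Real.exp (-a.re / 2 * t) := by
      have h2 : (-a.re / 2) * t ≤ Real.exp (-a.re / 2 * t) := by
        have := Real.add_one_le_exp (-a.re / 2 * t); linarith
      have h3 := mul_le_mul_of_nonneg_left h2
        (le_of_lt (by positivity : (0:ℝ) < 2 / -a.re))
      have he : 2 / -a.re * ((-a.re / 2) * t) = t := by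
        have hane2 : a.re ≠ 0 := by linarith
        field_simp
      rw [he] at h3
      exact h3
    have step1 : t * Real.exp (a.re * t)
        ≤ (2 / -a.re * Real.exp (-a.re / 2 * t)) * Real.exp (a.re * t) :=
      mul_le_mul_of_nonneg_right key (Real.exp_pos _).le
    have step2 : (2 / -a.re * Real.exp (-a.re / 2 * t)) * Real.exp (a.re * t)
        = 2 / -a.re * Real.exp (-(-a.re / 2) * t) := by
      rw [mul_assoc, ← Real.exp_add]
      ring_nf
    rw [step2] at step1
    exact step1

-- from a3.lean
lemma rr_integral_mul_exp_Ioi (a : ℂ) (ha : a.re < 0) :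
    ∫ t in Ioi (0:ℝ), (t:ℂ) * Complex.exp (a * t) = 1 / a ^ 2 := by
  have ha0 : a ≠ 0 := fun h => by simp [h] at ha
  have ftc : ∀ Y : ℝ, (∫ t in (0:ℝ)..Y, (t:ℂ) * Complex.exp (a * t))
      = ((Y:ℂ)/a - 1/a^2) * Complex.exp (a * Y) + 1/a^2 := by
    intro Y
    have hder : ∀ t ∈ Set.uIcc (0:ℝ) Y,
        HasDerivAt (fun s : ℝ => ((s:ℂ)/a - 1/a^2) * Complex.exp (a * s))
          ((t:ℂ) * Complex.exp (a * t)) t := by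
      intro t _
      have h1 : HasDerivAt (fun z : ℂ => z/a - 1/a^2) (1/a) (t:ℂ) := by
        have := ((hasDerivAt_id (t:ℂ)).div_const a).sub_const (1/a^2)
        simp only [id_eq, one_div] at this ⊢
        exact this
      have h2 : HasDerivAt (fun z : ℂ => Complex.exp (a * z))
          (Complex.exp (a * t) * a) (t:ℂ) := by
        simpa using ((hasDerivAt_id (t:ℂ)).const_mul a).cexp
      have h3 := h1.mul h2
      have h4 : HasDerivAt (fun z : ℂ => (z/a - 1/a^2) * Complex.exp (a * z))
          ((t:ℂ) * Complex.exp (a * (t:ℂ))) (t:ℂ) := by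
        refine h3.congr_deriv ?_
        field_simp
        ring
      exact h4.comp_ofReal
    rw [intervalIntegral.integral_eq_sub_of_hasDerivAt hder (by
      apply Continuous.intervalIntegrable
      exact Complex.continuous_ofReal.mul (Complex.continuous_exp.comp
        (continuous_const.mul Complex.continuous_ofReal)))]
    push_cast
    simp
  have h1 := intervalIntegral_tendsto_integral_Ioi 0 (rr_integrable_mul_exp a ha) tendsto_id
  have h2 : Tendsto (fun Y : ℝ => ((Y:ℂ)/a - 1/a^2) * Complex.exp (a * Y) + 1/a^2)
      atTop (𝓝 (1/a^2)) := by
    have h3 := (((rr_tendsto_mul_exp_zero a ha).div_const a).sub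
      ((rr_tendsto_exp_zero a ha).div_const (a^2))).add_const (1/(a^2))
    simp only [zero_div, sub_zero, zero_add, zero_sub, neg_zero] at h3
    refine h3.congr fun Y => ?_
    field_simp
  simp_rw [ftc] at h1
  exact tendsto_nhds_unique h1 h2

-- from a4.lean
lemma rr_f_eq_zero (c0 : ℂ) (d : ℕ → ℂ) (l : ℕ → ℂ)
    (hd : Summable fun n => ‖d n‖) (Λ K : ℝ) (hK : 0 ≤ K)
    (hre : ∀ n, (l n).re ≤ Λ) (him : ∀ n, |(l n).im| ≤ K)
    (T : ℝ) (hT : 0 < T)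
    (hzero : ∀ t : ℝ, t ∈ Set.Ioo 0 T →
      c0 * (t : ℂ) * Complex.exp (l 0 * (t : ℂ))
        + ∑' n : ℕ, d n * Complex.exp (l n * (t : ℂ)) = 0) :
    ∀ t : ℝ, 0 < t →
      c0 * (t : ℂ) * Complex.exp (l 0 * (t : ℂ))
        + ∑' n : ℕ, d n * Complex.exp (l n * (t : ℂ)) = 0 := by
  set F : ℂ → ℂ := fun z => c0 * z * Complex.exp (l 0 * z)
      + ∑' n : ℕ, d n * Complex.exp (l n * z) with hF
  intro t ht
  set B : ℝ := max t T + 1 with hB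
  have hBt : t < B := by
    have := le_max_left t T; simp [hB]; linarith
  have hBT : T < B := by
    have := le_max_right t T; simp [hB]; linarith
  have hB0 : 0 < B := lt_trans hT hBT
  set U : Set ℂ := {z | 0 < z.re} ∩ {z | z.re < B} ∩ ({z | -B < z.im} ∩ {z | z.im < B})
    with hU
  have hUopen : IsOpen U := by
    apply IsOpen.inter
    · exact (isOpen_lt continuous_const Complex.continuous_re).inter
        (isOpen_lt Complex.continuous_re continuous_const)
    · exact (isOpen_lt continuous_const Complex.continuous_im).inter
        (isOpen_lt Complex.continuous_im continuous_const)
  have hUconv : Convex ℝ U :=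
    ((convex_halfSpace_re_gt 0).inter (convex_halfSpace_re_lt B)).inter
      ((convex_halfSpace_im_gt (-B)).inter (convex_halfSpace_im_lt B))
  -- differentiability
  have hdiff : DifferentiableOn ℂ F U := by
    apply DifferentiableOn.add
    · exact (((differentiable_const c0).mul differentiable_id).mul
        ((differentiable_id.const_mul (l 0)).cexp)).differentiableOn
    · refine differentiableOn_tsum_of_summable_norm
        (u := fun n => ‖d n‖ * Real.exp ((max Λ 0 + K) * B)) (hd.mul_right _)
        (fun n => (((differentiable_id.const_mul (l n)).cexp).const_mul (d n)).differentiableOn)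
        hUopen ?_
      intro n w hw
      obtain ⟨⟨hw1, hw2⟩, hw3, hw4⟩ := hw
      rw [norm_mul, Complex.norm_exp]
      refine mul_le_mul_of_nonneg_left (Real.exp_le_exp.2 ?_) (norm_nonneg _)
      have hrr : (l n * w).re = (l n).re * w.re - (l n).im * w.im := Complex.mul_re _ _
      rw [hrr]
      have h1 : (l n).re * w.re ≤ max Λ 0 * B := by
        rcases le_or_gt ((l n).re) 0 with h | h
        · have : (l n).re * w.re ≤ 0 := mul_nonpos_of_nonpos_of_nonneg h (le_of_lt hw1)
          have : (0:ℝ) ≤ max Λ 0 * B := mul_nonneg (le_max_right Λ 0) hB0.le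
          linarith
        · have h2 : (l n).re ≤ max Λ 0 := le_trans (hre n) (le_max_left Λ 0)
          have := mul_le_mul h2 (le_of_lt hw2) (le_of_lt hw1) (le_trans h.le h2)
          exact this
      have h2 : -((l n).im * w.im) ≤ K * B := by
        have : |(l n).im * w.im| ≤ K * B := by
          rw [abs_mul]
          apply mul_le_mul (him n) _ (abs_nonneg _) hK
          rw [abs_le]
          exact ⟨le_of_lt hw3, le_of_lt hw4⟩
        have := neg_abs_le ((l n).im * w.im)
        linarith
      linarith [h1, h2]
  have hanal : AnalyticOnNhd ℂ F U := hdiff.analyticOnNhd hUopen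
  have hmemT : ((T/2 : ℝ) : ℂ) ∈ U := by
    refine ⟨⟨?_, ?_⟩, ?_, ?_⟩ <;> simp <;> linarith
  have hfreq : ∃ᶠ z in 𝓝[≠] ((T/2 : ℝ) : ℂ), F z = 0 := by
    have hten : Tendsto (fun j : ℕ => ((T/2 + T/(j+3) : ℝ) : ℂ)) atTop
        (𝓝[≠] ((T/2:ℝ):ℂ)) := by
      apply tendsto_nhdsWithin_of_tendsto_nhds_of_eventually_within
      · have h0 : Tendsto (fun j : ℕ => T/((j:ℝ)+3)) atTop (𝓝 0) :=
          Tendsto.div_atTop tendsto_const_nhds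
            (tendsto_atTop_add_const_right _ 3 tendsto_natCast_atTop_atTop)
        have h1 : Tendsto (fun j : ℕ => T/2 + T/((j:ℝ)+3)) atTop (𝓝 (T/2)) := by
          simpa using tendsto_const_nhds.add h0
        exact (Complex.continuous_ofReal.tendsto _).comp h1
      · apply Eventually.of_forall
        intro j
        simp only [mem_compl_iff, mem_singleton_iff, ne_eq]
        intro hcon
        rw [Complex.ofReal_inj] at hcon
        have hj : (0:ℝ) < T/((j:ℝ)+3) := by positivity
        linarith
    refine hten.frequently (Eventually.of_forall fun j => ?_).frequently
    apply hzero
    constructor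
    · have hj : (0:ℝ) < T/((j:ℝ)+3) := by positivity
      linarith
    · have hj3 : (3:ℝ) ≤ (j:ℝ)+3 := by linarith [Nat.cast_nonneg (α := ℝ) j]
      have : T/((j:ℝ)+3) ≤ T/3 := by
        apply div_le_div_of_nonneg_left hT.le (by norm_num) hj3
      linarith
  have heq := hanal.eqOn_zero_of_preconnected_of_frequently_eq_zero
    hUconv.isPreconnected hmemT hfreq
  have hmemt : ((t : ℝ) : ℂ) ∈ U := by
    refine ⟨⟨?_, ?_⟩, ?_, ?_⟩ <;> simp <;> linarith
  exact heq hmemt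

-- from a6.lean
-- path-connectivity of the complement of finitely many leftward rays
lemma rr_V_pathConnected (C : Finset ℝ) (Λ : ℝ) :
    IsPathConnected {z : ℂ | ¬((z.im ∈ C) ∧ z.re ≤ Λ)} := by
  set V : Set ℂ := {z : ℂ | ¬((z.im ∈ C) ∧ z.re ≤ Λ)} with hV
  have hseg : ∀ x y : ℂ, segment ℝ x y ⊆ V → x ∈ V → y ∈ V → JoinedIn V x y := by
    intro x y hsub hx hy
    exact JoinedIn.mono (((convex_segment x y).isPathConnected
      ⟨x, left_mem_segment ℝ x y⟩).joinedIn x (left_mem_segment ℝ x y) y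
      (right_mem_segment ℝ x y)) hsub
  have hp : (⟨Λ + 1, 0⟩ : ℂ) ∈ V := by
    intro ⟨_, h2⟩
    simp only [Complex.ofReal_add] at h2
    norm_num at h2
  refine ⟨⟨Λ + 1, 0⟩, hp, ?_⟩
  intro z hz
  set z2 : ℂ := ⟨Λ + 1, z.im⟩ with hz2
  have hz2V : z2 ∈ V := by
    intro ⟨_, h2⟩
    simp only [hz2] at h2
    norm_num at h2
  have j1 : JoinedIn V z2 z := by
    apply hseg _ _ _ hz2V hz
    rintro w ⟨a, b, ha, hb, hab, rfl⟩
    have him : (a • z2 + b • z).im = z.im := by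
      simp only [Complex.add_im, Complex.smul_im, hz2]
      simp only [smul_eq_mul]
      linear_combination z.im * hab
    have hre : (a • z2 + b • z).re = a * (Λ + 1) + b * z.re := by
      simp only [Complex.add_re, Complex.smul_re, hz2, smul_eq_mul]
    intro ⟨h1, h2⟩
    rw [him] at h1
    -- z.im ∈ C, so z.re > Λ
    have hzre : Λ < z.re := by
      by_contra hc
      exact hz ⟨h1, le_of_not_gt hc⟩
    rw [hre] at h2
    have hb1 : b * Λ ≤ b * z.re := mul_le_mul_of_nonneg_left hzre.le hb
    have h4 : a * Λ + b * Λ = Λ := by linear_combination Λ * hab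
    have ha0 : a = 0 := le_antisymm (by linarith) ha
    have hb1' : b = 1 := by linarith
    rw [ha0, hb1'] at h2
    simp at h2
    linarith
  have j2 : JoinedIn V (⟨Λ + 1, 0⟩ : ℂ) z2 := by
    apply hseg _ _ _ hp hz2V
    rintro w ⟨a, b, ha, hb, hab, rfl⟩
    intro ⟨h1, h2⟩
    have hre : (a • (⟨Λ + 1, 0⟩ : ℂ) + b • z2).re = a * (Λ + 1) + b * (Λ + 1) := by
      simp only [Complex.add_re, Complex.smul_re, hz2, smul_eq_mul]
    rw [hre] at h2
    have h3 : a * (Λ + 1) + b * (Λ + 1) = Λ + 1 := by linear_combination (Λ+1) * hab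
    linarith
  exact j2.trans j1

-- from a5.lean
lemma rr_laplace (c0 : ℂ) (d l : ℕ → ℂ) (hd : Summable fun n => ‖d n‖)
    (Λ : ℝ) (hre : ∀ n, (l n).re ≤ Λ)
    (hzero : ∀ t : ℝ, 0 < t →
      c0 * (t:ℂ) * Complex.exp (l 0 * (t:ℂ))
        + ∑' n : ℕ, d n * Complex.exp (l n * (t:ℂ)) = 0)
    (σ : ℝ) (hσ : Λ < σ) :
    c0 / ((σ:ℂ) - l 0)^2 + ∑' n : ℕ, d n / ((σ:ℂ) - l n) = 0 := by
  set a : ℕ → ℂ := fun n => l n - σ with ha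
  have hare : ∀ n, (a n).re < 0 := by
    intro n; simp [ha]; linarith [hre n]
  have hane : ∀ n, a n ≠ 0 := fun n h => by
    have := hare n; rw [h] at this; simp at this
  -- the integrand family
  set G : ℕ → ℝ → ℂ := fun n t => d n * Complex.exp (a n * t) with hG
  have hGint : ∀ n, IntegrableOn (G n) (Ioi 0) := fun n =>
    (rr_integrable_exp (a n) (hare n)).const_mul (d n)
  -- summability of integrals of norms
  have hnorm_int : ∀ n, (∫ t in Ioi (0:ℝ), ‖G n t‖)
      ≤ ‖d n‖ * ∫ t in Ioi (0:ℝ), Real.exp (-(σ - Λ) * t) := by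
    intro n
    rw [← MeasureTheory.integral_const_mul]
    apply setIntegral_mono_on (hGint n).norm
      (((exp_neg_integrableOn_Ioi 0 (by linarith : (0:ℝ) < σ - Λ)).const_mul
        (‖d n‖))) measurableSet_Ioi
    intro t ht
    rw [hG]
    simp only [norm_mul, Complex.norm_exp]
    apply mul_le_mul_of_nonneg_left _ (norm_nonneg _)
    apply Real.exp_le_exp.2
    have : (a n * t).re = (a n).re * t := by simp [Complex.mul_re]
    rw [this]
    have h1 : (a n).re ≤ -(σ - Λ) := by simp [ha]; linarith [hre n]
    exact mul_le_mul_of_nonneg_right h1 (le_of_lt ht)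
  have hsum_int : Summable fun n => ∫ t in Ioi (0:ℝ), ‖G n t‖ := by
    apply Summable.of_nonneg_of_le
      (fun n => integral_nonneg fun t => norm_nonneg _) hnorm_int
    exact hd.mul_right _
  -- interchange
  have hinter := integral_tsum_of_summable_integral_norm hGint hsum_int
  -- LHS: the sum of integrals
  have hLHS : ∑' n, ∫ t in Ioi (0:ℝ), G n t = ∑' n : ℕ, d n / ((σ:ℂ) - l n) := by
    apply tsum_congr
    intro n
    rw [hG]
    simp only
    rw [MeasureTheory.integral_const_mul, rr_integral_exp_Ioi (a n) (hare n)]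
    have h1 : a n ≠ 0 := hane n
    rw [ha] at h1
    simp only [ha]
    have h2 : (σ:ℂ) - l n ≠ 0 := fun h => h1 (by linear_combination -h)
    field_simp
    ring
  -- RHS: the integral of the sum
  have hRHS : (∫ t in Ioi (0:ℝ), ∑' n, G n t) = -(c0 / ((σ:ℂ) - l 0)^2) := by
    have hcong : ∀ t ∈ Ioi (0:ℝ), (∑' n, G n t)
        = -(c0 * (t:ℂ) * Complex.exp ((l 0 - σ) * t)) := by
      intro t ht
      have h1 : ∀ n : ℕ, G n t = d n * Complex.exp (l n * t) * Complex.exp (-(σ:ℂ) * t) := by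
        intro n
        rw [hG]
        simp only [ha]
        rw [mul_assoc, ← Complex.exp_add]
        ring_nf
      simp_rw [h1]
      rw [tsum_mul_right]
      have h2 := hzero t ht
      have h3 : (∑' n : ℕ, d n * Complex.exp (l n * (t:ℂ)))
          = -(c0 * (t:ℂ) * Complex.exp (l 0 * (t:ℂ))) := by linear_combination h2
      rw [h3]
      rw [neg_mul, mul_assoc, mul_assoc, ← Complex.exp_add]
      ring_nf
    rw [setIntegral_congr_fun measurableSet_Ioi hcong]
    rw [MeasureTheory.integral_neg]
    have : (∫ t in Ioi (0:ℝ), c0 * (t:ℂ) * Complex.exp ((l 0 - σ) * t))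
        = c0 / ((σ:ℂ) - l 0)^2 := by
      simp_rw [mul_assoc]
      rw [MeasureTheory.integral_const_mul, rr_integral_mul_exp_Ioi (l 0 - σ) (hare 0)]
      rw [show ((σ:ℂ) - l 0)^2 = (l 0 - σ)^2 by ring]
      ring
    rw [this]
  rw [← hinter, hLHS] at hRHS
  linear_combination hRHS

-- from a7.lean
lemma rr_g_eqOn_zero (c0 : ℂ) (d l : ℕ → ℂ) (hd : Summable fun n => ‖d n‖)
    (Λ : ℝ) (C : Finset ℝ)
    (hre : ∀ n, (l n).re ≤ Λ) (himC : ∀ n, (l n).im ∈ C)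
    (hg0 : ∀ σ : ℝ, Λ < σ →
      c0 / ((σ:ℂ) - l 0)^2 + ∑' n : ℕ, d n / ((σ:ℂ) - l n) = 0) :
    ∀ z : ℂ, ¬((z.im ∈ C) ∧ z.re ≤ Λ) →
      c0 / (z - l 0)^2 + ∑' n : ℕ, d n / (z - l n) = 0 := by
  set V : Set ℂ := {z : ℂ | ¬((z.im ∈ C) ∧ z.re ≤ Λ)} with hV
  set g : ℂ → ℂ := fun z => c0 / (z - l 0)^2 + ∑' n : ℕ, d n / (z - l n) with hg
  set R : Set ℂ := {z : ℂ | (z.im ∈ C) ∧ z.re ≤ Λ} with hR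
  have hRclosed : IsClosed R := by
    have : R = (fun z : ℂ => z.im) ⁻¹' C ∩ (fun z : ℂ => z.re) ⁻¹' (Iic Λ) := by
      ext z; simp [hR]
    rw [this]
    exact (C.finite_toSet.isClosed.preimage Complex.continuous_im).inter
      (isClosed_Iic.preimage Complex.continuous_re)
  have hVR : V = Rᶜ := by ext z; simp [hV, hR]
  have hVopen : IsOpen V := by rw [hVR]; exact hRclosed.isOpen_compl
  have hlR : ∀ n, l n ∈ R := fun n => ⟨himC n, hre n⟩
  have hRne : R.Nonempty := ⟨l 0, hlR 0⟩
  -- analyticity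
  have hanal : AnalyticOnNhd ℂ g V := by
    intro z hz
    have hznR : z ∉ R := by rw [hVR] at hz; exact hz
    have hr : 0 < Metric.infDist z R :=
      (hRclosed.notMem_iff_infDist_pos hRne).1 hznR
    set r : ℝ := Metric.infDist z R with hr'
    have hdist : ∀ w : ℂ, w ∈ Metric.ball z (r/2) → ∀ n, r/2 ≤ dist w (l n) := by
      intro w hw n
      have h1 : r ≤ dist z (l n) := Metric.infDist_le_dist_of_mem (hlR n)
      have h2 : dist z w < r/2 := by
        rw [Metric.mem_ball] at hw; rw [dist_comm]; exact hw
      have := dist_triangle z w (l n)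
      linarith
  -- differentiability on the ball
    have hdiff : DifferentiableOn ℂ g (Metric.ball z (r/2)) := by
      apply DifferentiableOn.add
      · apply DifferentiableOn.div (differentiableOn_const c0)
          (((differentiable_id.sub_const (l 0)).pow 2).differentiableOn)
        intro w hw
        have h2 := hdist w hw 0
        rw [dist_eq_norm] at h2
        have hne : w - l 0 ≠ 0 := by
          intro h
          rw [h] at h2
          simp at h2
          linarith
        exact pow_ne_zero 2 hne
      · refine differentiableOn_tsum_of_summable_norm
          (u := fun n => ‖d n‖ * (2/r)) (hd.mul_right _) (fun n => ?_)
          Metric.isOpen_ball (fun n w hw => ?_)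
        · apply DifferentiableOn.div (differentiableOn_const (d n))
            ((differentiable_id.sub_const (l n)).differentiableOn)
          intro w hw
          have h2 := hdist w hw n
          rw [dist_eq_norm] at h2
          intro h
          simp only [id_eq] at h
          rw [h] at h2
          simp at h2
          linarith
        · have hdn := hdist w hw n
          rw [dist_eq_norm] at hdn
          rw [norm_div]
          rw [div_le_iff₀ (by linarith : (0:ℝ) < ‖w - l n‖)]
          calc ‖d n‖ = ‖d n‖ * (2/r) * (r/2) := by field_simp
            _ ≤ ‖d n‖ * (2/r) * ‖w - l n‖ := by
                apply mul_le_mul_of_nonneg_left hdn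
                positivity
    exact (hdiff.analyticOnNhd Metric.isOpen_ball) z (Metric.mem_ball_self (by linarith))
  -- identity theorem
  have hmem : ((Λ+1 : ℝ) : ℂ) ∈ V := by
    intro ⟨_, h2⟩
    simp at h2
    linarith
  have hfreq : ∃ᶠ w in 𝓝[≠] ((Λ+1:ℝ):ℂ), g w = 0 := by
    have hten : Tendsto (fun j : ℕ => ((Λ+1+1/(j+1) : ℝ) : ℂ)) atTop
        (𝓝[≠] ((Λ+1:ℝ):ℂ)) := by
      apply tendsto_nhdsWithin_of_tendsto_nhds_of_eventually_within
      · have h0 : Tendsto (fun j : ℕ => 1/((j:ℝ)+1)) atTop (𝓝 0) :=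
          Tendsto.div_atTop tendsto_const_nhds
            (tendsto_atTop_add_const_right _ 1 tendsto_natCast_atTop_atTop)
        have h1 : Tendsto (fun j : ℕ => Λ+1+1/((j:ℝ)+1)) atTop (𝓝 (Λ+1)) := by
          simpa using tendsto_const_nhds.add h0
        exact (Complex.continuous_ofReal.tendsto _).comp h1
      · apply Eventually.of_forall
        intro j
        simp only [mem_compl_iff, mem_singleton_iff, ne_eq]
        intro hcon
        rw [Complex.ofReal_inj] at hcon
        have : (0:ℝ) < 1/((j:ℝ)+1) := by positivity
        linarith
    refine hten.frequently (Eventually.of_forall fun j => ?_).frequently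
    apply hg0
    have : (0:ℝ) < 1/((j:ℝ)+1) := by positivity
    linarith
  have heq := hanal.eqOn_zero_of_preconnected_of_frequently_eq_zero
    (rr_V_pathConnected C Λ).isConnected.isPreconnected hmem hfreq
  intro z hz
  exact heq hz

-- from a8.lean
lemma rr_delta (C : Finset ℝ) (y : ℝ) :
    ∃ δ : ℝ, 0 < δ ∧ ∀ ε : ℝ, 0 < ε → ε ≤ δ → ∀ x ∈ C, ε ≤ |y + ε - x| := by
  classical
  set P := C.filter (fun x => y < x) with hP
  by_cases hPne : P.Nonempty
  · set m := P.min' hPne with hm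
    have hym : y < m := (Finset.mem_filter.1 (P.min'_mem hPne)).2
    refine ⟨(m - y)/2, by linarith, ?_⟩
    intro ε hε hεδ x hx
    rcases le_or_gt x y with h | h
    · rw [_root_.abs_of_nonneg (by linarith)]
      linarith
    · have hxP : x ∈ P := Finset.mem_filter.2 ⟨hx, h⟩
      have hmx : m ≤ x := Finset.min'_le P x hxP
      rw [_root_.abs_of_nonpos (by linarith)]
      linarith
  · refine ⟨1, one_pos, ?_⟩
    intro ε hε hεδ x hx
    have hxy : x ≤ y := by
      by_contra hc
      exact hPne ⟨x, Finset.mem_filter.2 ⟨hx, lt_of_not_ge hc⟩⟩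
    rw [_root_.abs_of_nonneg (by linarith)]
    linarith



-- from a9.lean
lemma rr_seq (C : Finset ℝ) (l : ℕ → ℂ) (himC : ∀ n, (l n).im ∈ C) (m : ℕ) :
    ∃ ε : ℕ → ℝ, (∀ j, 0 < ε j) ∧ (∃ δ > 0, ∀ j, ε j ≤ δ) ∧
      Tendsto ε atTop (𝓝 0) ∧
      (∀ j, (l m + (ε j : ℂ) * I).im ∉ C) ∧
      (∀ j n, ε j ≤ ‖(l m + (ε j : ℂ) * I) - l n‖) := by
  obtain ⟨δ, hδ, hδ2⟩ := rr_delta C ((l m).im)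
  refine ⟨fun j => δ/(j+1), fun j => by positivity, ⟨δ, hδ, fun j => ?_⟩, ?_, ?_, ?_⟩
  · rw [div_le_iff₀ (by positivity)]
    nlinarith [Nat.cast_nonneg (α := ℝ) j]
  · exact Tendsto.div_atTop tendsto_const_nhds
      (tendsto_atTop_add_const_right _ 1 tendsto_natCast_atTop_atTop)
  · intro j hmem
    have him0 : ∀ e : ℝ, (l m + (e : ℂ) * I).im = (l m).im + e := fun e => by
      simp [Complex.add_im, Complex.mul_im]
    rw [him0 (δ/(j+1))] at hmem
    have := hδ2 (δ/(j+1)) (by positivity)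
      (by rw [div_le_iff₀ (by positivity)]; nlinarith [Nat.cast_nonneg (α := ℝ) j])
      ((l m).im + δ/(j+1)) hmem
    simp at this
    linarith [this, (by positivity : (0:ℝ) < δ/(j+1))]
  · intro j n
    set e : ℝ := δ/((j:ℝ)+1) with he
    have hepos : 0 < e := by positivity
    have heδ : e ≤ δ := by
      rw [he, div_le_iff₀ (by positivity)]
      nlinarith [Nat.cast_nonneg (α := ℝ) j]
    have him : ((l m + (e : ℂ) * I) - l n).im = (l m).im + e - (l n).im := by
      simp [Complex.add_im, Complex.sub_im, Complex.mul_im]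
    have h1 := hδ2 e hepos heδ ((l n).im) (himC n)
    calc e ≤ |(l m).im + e - (l n).im| := h1
      _ = |((l m + (e : ℂ) * I) - l n).im| := by rw [him]
      _ ≤ ‖(l m + (e : ℂ) * I) - l n‖ := Complex.abs_im_le_norm _

-- from a10.lean
lemma rr_extract_c0 (c0 : ℂ) (d l : ℕ → ℂ) (hd : Summable fun n => ‖d n‖)
    (hl_inj : Function.Injective l) (Λ : ℝ) (C : Finset ℝ)
    (himC : ∀ n, (l n).im ∈ C)
    (hg : ∀ z : ℂ, ¬((z.im ∈ C) ∧ z.re ≤ Λ) →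
      c0 / (z - l 0)^2 + ∑' n : ℕ, d n / (z - l n) = 0) :
    c0 = 0 := by
  obtain ⟨ε, hεpos, ⟨δ, hδ, hεδ⟩, hεten, hnotC, hlow⟩ := rr_seq C l himC 0
  set z : ℕ → ℂ := fun j => l 0 + (ε j : ℂ) * I with hz
  set w : ℕ → ℂ := fun j => (ε j : ℂ) * I with hw
  have hwne : ∀ j, w j ≠ 0 := by
    intro j h
    have : ‖w j‖ = ε j := by
      rw [hw]; simp [Complex.norm_real, _root_.abs_of_nonneg (hεpos j).le]
    rw [h] at this
    simp at this
    linarith [hεpos j, this]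
  have hwnorm : ∀ j, ‖w j‖ = ε j := by
    intro j; rw [hw]; simp [Complex.norm_real, _root_.abs_of_nonneg (hεpos j).le]
  have hzl : ∀ j, z j - l 0 = w j := fun j => by rw [hz, hw]; ring
  -- the equation at z j
  have heq : ∀ j, c0 = -∑' n : ℕ, (w j)^2 * (d n / (z j - l n)) := by
    intro j
    have h0 := hg (z j) (fun hc => hnotC j hc.1)
    rw [hzl j] at h0
    have h1 := congrArg (fun x => (w j)^2 * x) h0
    simp only [mul_add, mul_zero] at h1
    rw [mul_div_cancel₀ c0 (pow_ne_zero 2 (hwne j)), ← tsum_mul_left] at h1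
    linear_combination h1
  -- dominated convergence
  have hten : Tendsto (fun j => ∑' n : ℕ, (w j)^2 * (d n / (z j - l n))) atTop
      (𝓝 (∑' n : ℕ, (0 : ℂ))) := by
    apply tendsto_tsum_of_dominated_convergence (bound := fun n => δ * ‖d n‖)
      (hd.mul_left δ)
    · intro n
      by_cases hn : n = 0
      · subst hn
        have hrw : ∀ j, (w j)^2 * (d 0 / (z j - l 0)) = d 0 * w j := by
          intro j
          rw [hzl j]
          calc (w j)^2 * (d 0 / (w j)) = d 0 * ((w j)^2 / (w j)) := by ring
            _ = d 0 * w j := by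
                rw [pow_two, mul_div_assoc, div_self (hwne j), mul_one]
        simp_rw [hrw]
        have hwten : Tendsto w atTop (𝓝 0) := by
          have := (Complex.continuous_ofReal.tendsto 0).comp hεten
          have h2 := this.mul_const I
          simpa using h2
        simpa using tendsto_const_nhds.mul hwten
      · have hzten : Tendsto z atTop (𝓝 (l 0)) := by
          have := (Complex.continuous_ofReal.tendsto 0).comp hεten
          have h2 := (this.mul_const I).const_add (l 0)
          simpa using h2
        have hne : l 0 - l n ≠ 0 := by
          intro h
          exact hn (hl_inj (by linear_combination h : l 0 = l n)).symm
        have hwten2 : Tendsto (fun j => (w j)^2) atTop (𝓝 0) := by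
          have hwten : Tendsto w atTop (𝓝 0) := by
            have := (Complex.continuous_ofReal.tendsto 0).comp hεten
            simpa using this.mul_const I
          simpa [pow_two] using hwten.mul hwten
        have hden : Tendsto (fun j => d n / (z j - l n)) atTop
            (𝓝 (d n / (l 0 - l n))) :=
          tendsto_const_nhds.div (hzten.sub_const (l n)) hne
        simpa using hwten2.mul hden
    · apply Eventually.of_forall
      intro j n
      rw [norm_mul, norm_div, norm_pow, hwnorm j]
      have hl : ε j ≤ ‖z j - l n‖ := hlow j n
      have hzln : (0:ℝ) < ‖z j - l n‖ := lt_of_lt_of_le (hεpos j) hl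
      calc ε j ^ 2 * (‖d n‖ / ‖z j - l n‖) ≤ ε j ^ 2 * (‖d n‖ / ε j) := by
            apply mul_le_mul_of_nonneg_left _ (by positivity)
            apply div_le_div_of_nonneg_left (norm_nonneg _) (hεpos j) hl
        _ = ε j * ‖d n‖ := by field_simp [pow_two, (hεpos j).ne']
        _ ≤ δ * ‖d n‖ := mul_le_mul_of_nonneg_right (hεδ j) (norm_nonneg _)
  rw [tsum_zero] at hten
  have hconst : Tendsto (fun j : ℕ => ∑' n : ℕ, (w j)^2 * (d n / (z j - l n)))
      atTop (𝓝 (-c0)) := by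
    have hfun : (fun j : ℕ => ∑' n : ℕ, (w j)^2 * (d n / (z j - l n)))
        = fun _ : ℕ => -c0 := by
      funext j
      linear_combination heq j
    rw [hfun]
    exact tendsto_const_nhds
  have h0 : -c0 = 0 := tendsto_nhds_unique hconst hten
  linear_combination -h0

-- from a11.lean
lemma rr_extract_d (d l : ℕ → ℂ) (hd : Summable fun n => ‖d n‖)
    (hl_inj : Function.Injective l) (Λ : ℝ) (C : Finset ℝ)
    (himC : ∀ n, (l n).im ∈ C) (m : ℕ)
    (hg : ∀ z : ℂ, ¬((z.im ∈ C) ∧ z.re ≤ Λ) →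
      (∑' n : ℕ, d n / (z - l n)) = 0) :
    d m = 0 := by
  obtain ⟨ε, hεpos, ⟨δ, hδ, hεδ⟩, hεten, hnotC, hlow⟩ := rr_seq C l himC m
  set z : ℕ → ℂ := fun j => l m + (ε j : ℂ) * I with hz
  set w : ℕ → ℂ := fun j => (ε j : ℂ) * I with hw
  have hwnorm : ∀ j, ‖w j‖ = ε j := by
    intro j; rw [hw]; simp [Complex.norm_real, _root_.abs_of_nonneg (hεpos j).le]
  have hwne : ∀ j, w j ≠ 0 := by
    intro j h
    have := hwnorm j
    rw [h] at this
    simp at this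
    linarith [hεpos j, this]
  have hzl : ∀ j, z j - l m = w j := fun j => by rw [hz, hw]; ring
  have heq : ∀ j, (∑' n : ℕ, w j * (d n / (z j - l n))) = 0 := by
    intro j
    have h0 := hg (z j) (fun hc => hnotC j hc.1)
    have h1 := congrArg (fun x => w j * x) h0
    simp only [mul_zero] at h1
    rw [← tsum_mul_left] at h1
    exact h1
  have hten : Tendsto (fun j => ∑' n : ℕ, w j * (d n / (z j - l n))) atTop
      (𝓝 (∑' n : ℕ, (if n = m then d m else 0 : ℂ))) := by
    apply tendsto_tsum_of_dominated_convergence (bound := fun n => ‖d n‖) hd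
    · intro n
      by_cases hn : n = m
      · subst hn
        have hrw : ∀ j, w j * (d n / (z j - l n)) = d n := by
          intro j
          rw [hzl j, mul_comm, div_mul_cancel₀ (d n) (hwne j)]
        simp_rw [hrw]
        simpa using tendsto_const_nhds
      · rw [if_neg hn]
        have hwten : Tendsto w atTop (𝓝 0) := by
          have := (Complex.continuous_ofReal.tendsto 0).comp hεten
          simpa using this.mul_const I
        have hzten : Tendsto z atTop (𝓝 (l m)) := by
          have := (Complex.continuous_ofReal.tendsto 0).comp hεten
          have h2 := (this.mul_const I).const_add (l m)
          simpa using h2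
        have hne : l m - l n ≠ 0 := by
          intro h
          exact hn (hl_inj (by linear_combination h : l m = l n)).symm
        have hden : Tendsto (fun j => d n / (z j - l n)) atTop
            (𝓝 (d n / (l m - l n))) :=
          tendsto_const_nhds.div (hzten.sub_const (l n)) hne
        simpa using hwten.mul hden
    · apply Eventually.of_forall
      intro j n
      rw [norm_mul, norm_div, hwnorm j]
      have hl : ε j ≤ ‖z j - l n‖ := hlow j n
      have hzln : (0:ℝ) < ‖z j - l n‖ := lt_of_lt_of_le (hεpos j) hl
      calc ε j * (‖d n‖ / ‖z j - l n‖) ≤ ε j * (‖d n‖ / ε j) := by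
            apply mul_le_mul_of_nonneg_left _ (hεpos j).le
            exact div_le_div_of_nonneg_left (norm_nonneg _) (hεpos j) hl
        _ = ‖d n‖ := by field_simp [(hεpos j).ne']
  rw [tsum_ite_eq] at hten
  have hconst : Tendsto (fun j : ℕ => ∑' n : ℕ, w j * (d n / (z j - l n)))
      atTop (𝓝 0) := by
    have hfun : (fun j : ℕ => ∑' n : ℕ, w j * (d n / (z j - l n)))
        = fun _ : ℕ => (0:ℂ) := by
      funext j
      exact heq j
    rw [hfun]
    exact tendsto_const_nhds
  exact (tendsto_nhds_unique hconst hten).symm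

end RRaux

/- Generalized Rosier–Rouchon lemma. Indexing: `c k` represents `c_{k-1}`
(so `c 0 = c_{-1}`, `c 1 = c_0`, `c (n+1) = c_n` for `n ≥ 1`), and
`l n` represents `λ_n` for `n ≥ 0`. -/
theorem rosier_rouchon_generalization
    (c : ℕ → ℂ) (l : ℕ → ℂ)
    (hl_inj : Function.Injective l)
    (hl0_real : (l 0).im = 0)
    (hl_real : {n : ℕ | (l n).im ≠ 0}.Finite)
    (hc_summable : Summable fun n => ‖c n‖)
    (hΛ : ∃ Λ : ℝ, ∀ n, (l n).re ≤ Λ)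
    (T : ℝ) (hT : 0 < T)
    (hzero : ∀ t : ℝ, t ∈ Set.Ioo 0 T →
      (c 0 * (t : ℂ) + c 1) * Complex.exp (l 0 * (t : ℂ))
        + ∑' n : ℕ, c (n + 2) * Complex.exp (l (n + 1) * (t : ℂ)) = 0) :
    ∀ n, c n = 0 := by
  classical
  obtain ⟨Λ, hΛ⟩ := hΛ
  set d : ℕ → ℂ := fun n => c (n + 1) with hd_def
  have hd : Summable fun n => ‖d n‖ :=
    hc_summable.comp_injective (add_left_injective 1)
  -- the finite set of imaginary parts
  set C : Finset ℝ := insert 0 (hl_real.toFinset.image fun n => (l n).im) with hC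
  have himC : ∀ n, (l n).im ∈ C := by
    intro n
    by_cases h : (l n).im = 0
    · rw [h, hC]; exact Finset.mem_insert_self 0 _
    · rw [hC]
      exact Finset.mem_insert_of_mem
        (Finset.mem_image_of_mem _ (hl_real.mem_toFinset.2 h))
  -- a uniform bound on the imaginary parts
  have hCne : C.Nonempty := ⟨0, by rw [hC]; exact Finset.mem_insert_self 0 _⟩
  set K : ℝ := (C.image fun x => |x|).max' (hCne.image _) with hK_def
  have him : ∀ n, |(l n).im| ≤ K := fun n =>
    Finset.le_max' _ _ (Finset.mem_image_of_mem _ (himC n))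
  have hK : 0 ≤ K := by
    have h0 : |(0:ℝ)| ∈ C.image fun x => |x| :=
      Finset.mem_image_of_mem _ (by rw [hC]; exact Finset.mem_insert_self 0 _)
    have := Finset.le_max' (C.image fun x => |x|) _ h0
    simpa using this
  -- the vanishing hypothesis in series form
  have hzero' : ∀ t : ℝ, t ∈ Set.Ioo 0 T →
      c 0 * (t : ℂ) * Complex.exp (l 0 * (t : ℂ))
        + ∑' n : ℕ, d n * Complex.exp (l n * (t : ℂ)) = 0 := by
    intro t ht
    have hsum_t : Summable fun n => d n * Complex.exp (l n * (t:ℂ)) := by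
      apply Summable.of_norm_bounded (g := fun n => ‖d n‖ * Real.exp (Λ * t)) (hd.mul_right _)
      intro n
      rw [norm_mul]
      apply mul_le_mul_of_nonneg_left _ (norm_nonneg _)
      rw [Complex.norm_exp]
      apply Real.exp_le_exp.2
      have hre : (l n * (t:ℂ)).re = (l n).re * t := by
        simp [Complex.mul_re]
      rw [hre]
      exact mul_le_mul_of_nonneg_right (hΛ n) ht.1.le
    rw [Summable.tsum_eq_zero_add hsum_t]
    have h2 := hzero t ht
    have h3 : (∑' n : ℕ, d (n + 1) * Complex.exp (l (n + 1) * (t:ℂ)))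
        = ∑' n : ℕ, c (n + 2) * Complex.exp (l (n + 1) * (t:ℂ)) := by
      apply tsum_congr
      intro n
      rw [hd_def]
    rw [h3]
    have h4 : d 0 = c 1 := by rw [hd_def]
    rw [h4]
    linear_combination h2
  -- extend the vanishing to all positive times
  have hzero'' := rr_f_eq_zero (c 0) d l hd Λ K hK hΛ him T hT hzero'
  -- Laplace transform vanishes
  have hg0 : ∀ σ : ℝ, Λ < σ →
      c 0 / ((σ:ℂ) - l 0)^2 + ∑' n : ℕ, d n / ((σ:ℂ) - l n) = 0 :=
    fun σ hσ => rr_laplace (c 0) d l hd Λ hΛ hzero'' σ hσ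
  -- identity theorem
  have hgV := rr_g_eqOn_zero (c 0) d l hd Λ C hΛ himC hg0
  -- extract the coefficients
  have hc0 : c 0 = 0 := rr_extract_c0 (c 0) d l hd hl_inj Λ C himC hgV
  have hgV' : ∀ z : ℂ, ¬((z.im ∈ C) ∧ z.re ≤ Λ) →
      (∑' n : ℕ, d n / (z - l n)) = 0 := by
    intro z hz
    have := hgV z hz
    rwa [hc0, zero_div, zero_add] at this
  have hdm : ∀ m, d m = 0 := fun m =>
    rr_extract_d d l hd hl_inj Λ C himC m hgV'
  intro n
  cases n with
  | zero => exact hc0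
  | succ k => exact hdm k
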